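/- Let n, p ≥ 1 be integers and L > 0. Let f_1, …, f_n : ℝ^p → ℝ be differentiable with L-Lipschitz gradients, and let x* ∈ ℝ^p satisfy ∑_{i=1}^n ∇f_i(x*) = 0. Let x = (x^1,…,x^n) and s = (s^1,…,s^n) in (ℝ^p)^n, let v ∈ ℝ^n with 0 ≤ v_i ≤ 1 for all i, and let φ ∈ ℝ^n be a stochastic vector. Define y^i = v_i s^i, s̃^i = s^i − ∑_{j=1}^n v_j s^j, x̄ = ∑_{i=1}^n φ_i x^i, x̃^i = x^i − x̄, and r = (x̄−x*, …, x̄−x*) ∈ (ℝ^p)^n. If ∑_{j=1}^n v_j s^j = ∑_{j=1}^n ∇f_j(x^j), then ‖y‖ ≤ nL‖x̃‖ + nL‖r‖ + ‖s̃‖. -/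

import Mathlib

/-- The block ℓ₂ norm on `(ℝ^p)^n`: `‖x‖ = (∑_i ‖x^i‖₂²)^{1/2}`. -/
noncomputable def bnorm {n p : ℕ} (x : Fin n → EuclideanSpace ℝ (Fin p)) : ℝ :=
  Real.sqrt (∑ i, ‖x i‖ ^ 2)

lemma bnorm_eq {n p : ℕ} (x : Fin n → EuclideanSpace ℝ (Fin p)) :
    bnorm x = ‖(WithLp.equiv 2 (Fin n → EuclideanSpace ℝ (Fin p))).symm x‖ := by
  rw [bnorm, PiLp.norm_eq_of_L2]
  rfl

lemma bnorm_nonneg {n p : ℕ} (x : Fin n → EuclideanSpace ℝ (Fin p)) : 0 ≤ bnorm x :=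
  Real.sqrt_nonneg _

lemma sum_norm_le_bnorm {n p : ℕ} (a : Fin n → EuclideanSpace ℝ (Fin p)) :
    ∑ i, ‖a i‖ ≤ Real.sqrt n * bnorm a := by
  have h := sq_sum_le_card_mul_sum_sq (s := (Finset.univ : Finset (Fin n)))
    (f := fun i => ‖a i‖)
  simp only [Finset.card_univ, Fintype.card_fin] at h
  have h2 : ∑ i, ‖a i‖ = Real.sqrt ((∑ i, ‖a i‖) ^ 2) := by
    rw [Real.sqrt_sq (by positivity)]
  rw [h2, bnorm, ← Real.sqrt_mul (by positivity)]
  exact Real.sqrt_le_sqrt h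

theorem stmt6 (n p : ℕ) (hn : 1 ≤ n) (hp : 1 ≤ p) (L : ℝ) (hL : 0 < L)
    (f : Fin n → EuclideanSpace ℝ (Fin p) → ℝ)
    (hdiff : ∀ i, Differentiable ℝ (f i))
    (hlip : ∀ i x y, ‖gradient (f i) x - gradient (f i) y‖ ≤ L * ‖x - y‖)
    (xstar : EuclideanSpace ℝ (Fin p))
    (hopt : ∑ i, gradient (f i) xstar = 0)
    (x s : Fin n → EuclideanSpace ℝ (Fin p))
    (v : Fin n → ℝ) (hv : ∀ i, 0 ≤ v i ∧ v i ≤ 1)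
    (φ : Fin n → ℝ) (hφnn : ∀ i, 0 ≤ φ i) (hφ1 : ∑ i, φ i = 1)
    (y : Fin n → EuclideanSpace ℝ (Fin p)) (hy : ∀ i, y i = v i • s i)
    (stld : Fin n → EuclideanSpace ℝ (Fin p))
    (hstld : ∀ i, stld i = s i - ∑ j, v j • s j)
    (xbar : EuclideanSpace ℝ (Fin p)) (hxbar : xbar = ∑ i, φ i • x i)
    (xtld : Fin n → EuclideanSpace ℝ (Fin p)) (hxtld : ∀ i, xtld i = x i - xbar)
    (r : Fin n → EuclideanSpace ℝ (Fin p)) (hr : ∀ i, r i = xbar - xstar)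
    (hvs : ∑ j, v j • s j = ∑ j, gradient (f j) (x j)) :
    bnorm y ≤ n * L * bnorm xtld + n * L * bnorm r + bnorm stld := by
  set G : EuclideanSpace ℝ (Fin p) := ∑ j, gradient (f j) (x j) with hG
  have hyG : ∀ i, y i = v i • stld i + v i • G := by
    intro i
    rw [hy, hstld, hvs, ← smul_add]
    congr 1
    abel
  -- triangle inequality
  have htri : bnorm y ≤ bnorm (fun i => v i • stld i) + bnorm (fun i => v i • G) := by
    have hyeq : y = (fun i => v i • stld i) + (fun i => v i • G) := by
      funext i; exact hyG i
    rw [hyeq, bnorm_eq, bnorm_eq, bnorm_eq]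
    exact norm_add_le ((WithLp.equiv 2 _).symm (fun i => v i • stld i)) ((WithLp.equiv 2 _).symm (fun i => v i • G))
  have h1 : bnorm (fun i => v i • stld i) ≤ bnorm stld := by
    apply Real.sqrt_le_sqrt
    apply Finset.sum_le_sum
    intro i _
    rw [norm_smul]
    have : ‖v i‖ ≤ 1 := by
      rw [Real.norm_eq_abs, abs_of_nonneg (hv i).1]; exact (hv i).2
    calc (‖v i‖ * ‖stld i‖) ^ 2 ≤ (1 * ‖stld i‖) ^ 2 := by
          apply pow_le_pow_left₀ (by positivity)
          exact mul_le_mul_of_nonneg_right this (norm_nonneg _)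
      _ = ‖stld i‖ ^ 2 := by ring
  have h2 : bnorm (fun i => v i • G) ≤ Real.sqrt n * ‖G‖ := by
    rw [bnorm, ← Real.sqrt_sq (norm_nonneg G), ← Real.sqrt_mul (by positivity)]
    apply Real.sqrt_le_sqrt
    have : ∀ i : Fin n, ‖v i • G‖ ^ 2 ≤ ‖G‖ ^ 2 := by
      intro i
      rw [norm_smul]
      have : ‖v i‖ ≤ 1 := by
        rw [Real.norm_eq_abs, abs_of_nonneg (hv i).1]; exact (hv i).2
      calc (‖v i‖ * ‖G‖) ^ 2 ≤ (1 * ‖G‖) ^ 2 := by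
            apply pow_le_pow_left₀ (by positivity)
            exact mul_le_mul_of_nonneg_right this (norm_nonneg _)
        _ = ‖G‖ ^ 2 := by ring
    calc ∑ i, ‖v i • G‖ ^ 2 ≤ ∑ _i : Fin n, ‖G‖ ^ 2 :=
          Finset.sum_le_sum fun i _ => this i
      _ = n * ‖G‖ ^ 2 := by simp [mul_comm]
  have hGbd : ‖G‖ ≤ L * (∑ i, ‖xtld i‖) + L * (∑ i, ‖r i‖) := by
    have hGeq : G = ∑ j, (gradient (f j) (x j) - gradient (f j) xstar) := by
      rw [Finset.sum_sub_distrib, hopt, sub_zero]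
    rw [hGeq]
    calc ‖∑ j, (gradient (f j) (x j) - gradient (f j) xstar)‖
        ≤ ∑ j, ‖gradient (f j) (x j) - gradient (f j) xstar‖ := norm_sum_le _ _
      _ ≤ ∑ j, L * (‖xtld j‖ + ‖r j‖) := by
          apply Finset.sum_le_sum
          intro j _
          have h := hlip j (x j) xstar
          have hx : x j - xstar = xtld j + r j := by
            rw [hxtld, hr]; abel
          calc ‖gradient (f j) (x j) - gradient (f j) xstar‖ ≤ L * ‖x j - xstar‖ := h
            _ = L * ‖xtld j + r j‖ := by rw [hx]
            _ ≤ L * (‖xtld j‖ + ‖r j‖) :=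
                mul_le_mul_of_nonneg_left (norm_add_le _ _) hL.le
      _ = L * (∑ i, ‖xtld i‖) + L * (∑ i, ‖r i‖) := by
          rw [Finset.mul_sum]
          simp_rw [mul_add]
          rw [Finset.sum_add_distrib, ← Finset.mul_sum, ← Finset.mul_sum]
  have hsn : Real.sqrt n * Real.sqrt n = (n : ℝ) := Real.mul_self_sqrt (by positivity)
  have hx1 := sum_norm_le_bnorm xtld
  have hx2 := sum_norm_le_bnorm r
  have key : Real.sqrt n * ‖G‖ ≤ n * L * bnorm xtld + n * L * bnorm r := by
    have h3 : Real.sqrt n * ‖G‖ ≤ Real.sqrt n * (L * (∑ i, ‖xtld i‖) + L * (∑ i, ‖r i‖)) :=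
      mul_le_mul_of_nonneg_left hGbd (Real.sqrt_nonneg _)
    have h4 : Real.sqrt n * (L * (∑ i, ‖xtld i‖) + L * (∑ i, ‖r i‖))
        ≤ Real.sqrt n * (L * (Real.sqrt n * bnorm xtld) + L * (Real.sqrt n * bnorm r)) := by
      apply mul_le_mul_of_nonneg_left _ (Real.sqrt_nonneg _)
      apply add_le_add
      · exact mul_le_mul_of_nonneg_left hx1 hL.le
      · exact mul_le_mul_of_nonneg_left hx2 hL.le
    calc Real.sqrt n * ‖G‖ ≤ _ := h3
      _ ≤ _ := h4
      _ = (Real.sqrt n * Real.sqrt n) * L * bnorm xtld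
            + (Real.sqrt n * Real.sqrt n) * L * bnorm r := by ring
      _ = n * L * bnorm xtld + n * L * bnorm r := by rw [hsn]
  calc bnorm y ≤ bnorm (fun i => v i • stld i) + bnorm (fun i => v i • G) := htri
    _ ≤ bnorm stld + Real.sqrt n * ‖G‖ := add_le_add h1 h2
    _ ≤ bnorm stld + (n * L * bnorm xtld + n * L * bnorm r) := by linarith
    _ = n * L * bnorm xtld + n * L * bnorm r + bnorm stld := by ring
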